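/- Let U = ⋃_{n∈ℕ} (closure(B_{2ⁿ+1}) \ B_{2ⁿ−1}) ⊆ ℝ^N be the union of the closed annuli of inner radius 2ⁿ−1 and outer radius 2ⁿ+1 centered at the origin. Then for every e ∈ S^{N-1} and n ∈ ℕ, dist(3·2ⁿ e, U) = 2ⁿ − 1; consequently B(U) = ∅ and U(U) = ∅. -/
import Mathlib


open Filter Metric Topology

/-- The union of the closed annuli of inner radius `2ⁿ−1` and outer radius `2ⁿ+1`
centered at the origin. -/
def annuliUnion (N : ℕ) : Set (EuclideanSpace ℝ (Fin N)) :=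
  ⋃ n : ℕ, Metric.closedBall (0 : EuclideanSpace ℝ (Fin N)) (2 ^ n + 1) \
    Metric.ball (0 : EuclideanSpace ℝ (Fin N)) (2 ^ n - 1)

lemma mem_annuliUnion_iff {N : ℕ} {x : EuclideanSpace ℝ (Fin N)} :
    x ∈ annuliUnion N ↔ ∃ m : ℕ, (2:ℝ) ^ m - 1 ≤ ‖x‖ ∧ ‖x‖ ≤ 2 ^ m + 1 := by
  simp only [annuliUnion, Set.mem_iUnion, Set.mem_diff, Metric.mem_closedBall,
    Metric.mem_ball, dist_zero_right, not_lt]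
  constructor
  · rintro ⟨m, h1, h2⟩; exact ⟨m, h2, h1⟩
  · rintro ⟨m, h1, h2⟩; exact ⟨m, h2, h1⟩

lemma annuli_infDist {N : ℕ} (e : EuclideanSpace ℝ (Fin N)) (he : ‖e‖ = 1) (n : ℕ) :
    Metric.infDist (((3 * 2 ^ n : ℝ)) • e) (annuliUnion N) = 2 ^ n - 1 := by
  have h2n : (0:ℝ) < 2 ^ n := by positivity
  have h1n : (1:ℝ) ≤ 2 ^ n := by simpa using pow_le_pow_right₀ (by norm_num : (1:ℝ) ≤ 2) (Nat.zero_le n)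
  have hne : (annuliUnion N).Nonempty :=
    ⟨e, mem_annuliUnion_iff.2 ⟨0, by simp [he]⟩⟩
  apply le_antisymm
  · have hmem : ((2:ℝ) ^ (n+1) + 1) • e ∈ annuliUnion N := by
      refine mem_annuliUnion_iff.2 ⟨n+1, ?_, ?_⟩ <;>
        rw [norm_smul, he, mul_one, Real.norm_eq_abs,
          abs_of_pos (by positivity)] <;> linarith
    calc Metric.infDist (((3 * 2 ^ n : ℝ)) • e) (annuliUnion N)
        ≤ dist (((3 * 2 ^ n : ℝ)) • e) (((2:ℝ) ^ (n+1) + 1) • e) :=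
          Metric.infDist_le_dist_of_mem hmem
      _ = 2 ^ n - 1 := by
          rw [dist_eq_norm, ← sub_smul, norm_smul, he, mul_one, Real.norm_eq_abs]
          rw [pow_succ]
          rw [abs_of_nonneg (by linarith)]
          ring
  · by_contra hlt
    push_neg at hlt
    obtain ⟨y, hy, hdy⟩ := (Metric.infDist_lt_iff hne).1 hlt
    refine absurd hdy (not_lt.2 ?_)
    obtain ⟨m, h1, h2⟩ := mem_annuliUnion_iff.1 hy
    have hd : |‖((3 * 2 ^ n : ℝ)) • e‖ - ‖y‖| ≤ dist (((3 * 2 ^ n : ℝ)) • e) y := by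
      rw [dist_eq_norm]; exact abs_norm_sub_norm_le _ _
    have hnx : ‖((3 * 2 ^ n : ℝ)) • e‖ = 3 * 2 ^ n := by
      rw [norm_smul, he, mul_one, Real.norm_eq_abs, abs_of_pos (by positivity)]
    rw [hnx] at hd
    refine le_trans ?_ hd
    rcases le_or_gt m (n+1) with hm | hm
    · have : (2:ℝ) ^ m ≤ 2 ^ (n+1) := pow_le_pow_right₀ (by norm_num) hm
      rw [pow_succ] at this
      have h3 : (2:ℝ) ^ n - 1 ≤ 3 * 2 ^ n - ‖y‖ := by linarith
      exact h3.trans (le_abs_self _)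
    · have hm' : n + 2 ≤ m := hm
      have : (2:ℝ) ^ (n+2) ≤ 2 ^ m := pow_le_pow_right₀ (by norm_num) hm'
      have h4 : (2:ℝ) ^ (n+2) = 4 * 2 ^ n := by ring
      have h3 : (2:ℝ) ^ n - 1 ≤ ‖y‖ - 3 * 2 ^ n := by
        rw [h4] at this; linarith
      calc (2:ℝ) ^ n - 1 ≤ -(3 * 2 ^ n - ‖y‖) := by linarith
        _ ≤ |3 * 2 ^ n - ‖y‖| := neg_le_abs _

/-- for `U = ⋃_n (closure(B_{2ⁿ+1}) \ B_{2ⁿ−1})`, one has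
`dist(3·2ⁿe, U) = 2ⁿ − 1` for every unit vector `e` and `n ∈ ℕ`; consequently
`B(U) = ∅` and `U(U) = ∅`. -/
theorem annuli_dist_and_directions (N : ℕ) (hN : 1 ≤ N) :
    (∀ e : EuclideanSpace ℝ (Fin N), ‖e‖ = 1 → ∀ n : ℕ,
      Metric.infDist (((3 * 2 ^ n : ℝ)) • e) (annuliUnion N) = 2 ^ n - 1) ∧
    (∀ ξ : EuclideanSpace ℝ (Fin N), ‖ξ‖ = 1 →
      ¬ (0 < Filter.liminf
          (fun τ : ℝ => Metric.infDist (τ • ξ) (annuliUnion N) / τ) Filter.atTop)) ∧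
    (∀ ξ : EuclideanSpace ℝ (Fin N), ‖ξ‖ = 1 →
      ¬ Filter.Tendsto
          (fun τ : ℝ => Metric.infDist (τ • ξ) (annuliUnion N) / τ)
          Filter.atTop (nhds 0)) := by
  refine ⟨fun e he n => annuli_infDist e he n, ?_, ?_⟩
  · intro ξ hξ hpos
    have hfreq : ∃ᶠ τ in atTop,
        Metric.infDist (τ • ξ) (annuliUnion N) / τ ≤ 0 := by
      rw [Filter.frequently_atTop]
      intro a
      obtain ⟨n, hn⟩ := pow_unbounded_of_one_lt a (by norm_num : (1:ℝ) < 2)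
      refine ⟨2 ^ n, hn.le, ?_⟩
      have hmem : ((2:ℝ) ^ n) • ξ ∈ annuliUnion N := by
        refine mem_annuliUnion_iff.2 ⟨n, ?_, ?_⟩ <;>
          rw [norm_smul, hξ, mul_one, Real.norm_eq_abs,
            abs_of_pos (by positivity)] <;> linarith
      rw [Metric.infDist_zero_of_mem hmem, zero_div]
    have : Filter.liminf
        (fun τ : ℝ => Metric.infDist (τ • ξ) (annuliUnion N) / τ) Filter.atTop ≤ 0 := by
      refine Filter.liminf_le_of_frequently_le hfreq ⟨0, Filter.eventually_map.2 ?_⟩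
      filter_upwards [Filter.eventually_ge_atTop (0:ℝ)] with τ hτ
      exact div_nonneg Metric.infDist_nonneg hτ
    exact absurd (hpos.trans_le this) (lt_irrefl 0)
  · intro ξ hξ h
    have hev : ∀ᶠ τ in atTop,
        Metric.infDist (τ • ξ) (annuliUnion N) / τ < 1/4 :=
      h.eventually_lt_const (by norm_num : (0:ℝ) < 1/4)
    rw [Filter.eventually_atTop] at hev
    obtain ⟨a, ha⟩ := hev
    obtain ⟨n, hn⟩ := pow_unbounded_of_one_lt a (by norm_num : (1:ℝ) < 2)
    have h2n : (0:ℝ) < 2 ^ (n+2) := by positivity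
    have hτ : a ≤ 3 * 2 ^ (n+2) := by
      have : (2:ℝ) ^ n ≤ 2 ^ (n+2) := pow_le_pow_right₀ (by norm_num) (by omega)
      linarith
    have hval := ha (3 * 2 ^ (n+2)) hτ
    rw [annuli_infDist ξ hξ (n+2)] at hval
    have h4 : (4:ℝ) ≤ 2 ^ (n+2) := by
      calc (4:ℝ) = 2 ^ 2 := by norm_num
        _ ≤ 2 ^ (n+2) := pow_le_pow_right₀ (by norm_num) (by omega)
    rw [div_lt_iff₀ (by positivity)] at hval
    nlinarith
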